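/- For all integers d ≥ 0, ℓ ≥ 0, the function z ↦ φ_ℓ(z) · D̂_{d,ℓ}(z) − N̂_{d,ℓ}(z) − ((−1)^d d! (d+ℓ)! / ((2d+ℓ)! (2d+ℓ+1)!)) z^{2d+1} vanishes to order at least 2d+2 at z = 0; that is, there exist constants C > 0 and δ > 0 such that |φ_ℓ(z) D̂_{d,ℓ}(z) − N̂_{d,ℓ}(z) − ((−1)^d d! (d+ℓ)!/((2d+ℓ)! (2d+ℓ+1)!)) z^{2d+1}| ≤ C |z|^{2d+2} for all |z| ≤ δ. -/

import Mathlib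

open Finset

/-- For an integer `ℓ ≥ 0` and `z ∈ ℂ`, `φ_ℓ(z) := Σ_{k=0}^∞ z^k/(ℓ+k)!`. -/
noncomputable def phiC (ℓ : ℕ) (z : ℂ) : ℂ := ∑' k : ℕ, z ^ k / ((ℓ + k).factorial : ℂ)

/-- The Padé numerator
`N̂_{d,ℓ}(z) := (d!/(2d+ℓ)!) Σ_{i=0}^{d} [Σ_{j=0}^{i} ((2d+ℓ−j)! (−1)^j)/(j!(d−j)!(ℓ+i−j)!)] z^i`. -/
noncomputable def Nhat (d ℓ : ℕ) (z : ℂ) : ℂ :=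
  ((d.factorial : ℂ) / ((2 * d + ℓ).factorial : ℂ)) *
    ∑ i ∈ Finset.range (d + 1),
      (∑ j ∈ Finset.range (i + 1),
        (((2 * d + ℓ - j).factorial : ℂ) * (-1 : ℂ) ^ j) /
          ((j.factorial : ℂ) * ((d - j).factorial : ℂ) * ((ℓ + i - j).factorial : ℂ))) * z ^ i

/-- The Padé denominator
`D̂_{d,ℓ}(z) := (d!/(2d+ℓ)!) Σ_{i=0}^{d} ((2d+ℓ−i)!/(i!(d−i)!)) (−z)^i`. -/
noncomputable def Dhat (d ℓ : ℕ) (z : ℂ) : ℂ :=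
  ((d.factorial : ℂ) / ((2 * d + ℓ).factorial : ℂ)) *
    ∑ i ∈ Finset.range (d + 1),
      (((2 * d + ℓ - i).factorial : ℂ) / ((i.factorial : ℂ) * ((d - i).factorial : ℂ))) * (-z) ^ i

lemma alt_sum_succ {R : Type*} [CommRing R] (d : ℕ) (h : ℕ → R) :
    ∑ i ∈ range (d + 2), (-1 : R) ^ i * ((d+1).choose i : R) * h i
      = ∑ i ∈ range (d + 1), (-1 : R) ^ i * (d.choose i : R) * (h i - h (i + 1)) := by
  rw [Finset.sum_range_succ' (fun i => (-1 : R) ^ i * ((d+1).choose i : R) * h i) (d+1)]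
  have key : ∀ i, (-1 : R) ^ (i+1) * ((d+1).choose (i+1) : R) * h (i+1)
      = -((-1:R)^i * (d.choose i : R) * h (i+1)) - (-1:R)^i * (d.choose (i+1) : R) * h (i+1) := by
    intro i
    rw [Nat.choose_succ_succ]
    push_cast
    ring
  simp_rw [key]
  rw [Finset.sum_sub_distrib, Finset.sum_neg_distrib]
  have step : ∑ i ∈ range (d+1), (-1:R)^i * (d.choose (i+1) : R) * h (i+1)
      = (d.choose 0 : R) * h 0 - ∑ i ∈ range (d+2), (-1:R)^i * (d.choose i : R) * h i := by
    rw [Finset.sum_range_succ' (fun i => (-1:R)^i * (d.choose i : R) * h i) (d+1)]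
    have : ∀ i ∈ range (d+1), (-1:R)^(i+1) * (d.choose (i+1):R) * h (i+1)
        = -((-1:R)^i * (d.choose (i+1):R) * h (i+1)) := fun i _ => by ring
    rw [Finset.sum_congr rfl this, Finset.sum_neg_distrib]
    simp
  rw [step, Finset.sum_range_succ (fun i => (-1:R)^i * (d.choose i : R) * h i) (d+1)]
  rw [Nat.choose_succ_self]
  simp only [Nat.cast_zero, zero_mul, mul_zero, add_zero, Nat.choose_zero_right, Nat.cast_one, one_mul]
  simp_rw [mul_sub]
  rw [Finset.sum_sub_distrib]
  ring

lemma choose_alt : ∀ (d : ℕ) (r M : ℕ), r < d → d ≤ M →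
    ∑ i ∈ range (d + 1), (-1 : ℤ) ^ i * (d.choose i : ℤ) * ((M - i).choose r : ℤ) = 0 := by
  intro d
  induction d with
  | zero => intro r M hr _; omega
  | succ d ih =>
    intro r M hr hM
    rw [show d + 1 + 1 = d + 2 from rfl, alt_sum_succ d (fun i => ((M - i).choose r : ℤ))]
    rcases Nat.eq_zero_or_pos r with hr0 | hrpos
    · subst hr0
      simp
    · have key : ∀ i ∈ range (d + 1),
          (-1 : ℤ) ^ i * (d.choose i : ℤ) * (((M - i).choose r : ℤ) - ((M - (i+1)).choose r : ℤ))
          = (-1 : ℤ) ^ i * (d.choose i : ℤ) * (((M - 1 - i).choose (r - 1) : ℤ)) := by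
        intro i hi
        simp only [Finset.mem_range] at hi
        have h1 : M - i = (M - (i+1)) + 1 := by omega
        have h2 : r = (r - 1) + 1 := by omega
        rw [h1, h2, Nat.choose_succ_succ]
        have h3 : M - (i + 1) = M - 1 - i := by omega
        push_cast
        rw [h3]
        ring
      rw [Finset.sum_congr rfl key]
      exact ih (r-1) (M-1) (by omega) (by omega)

lemma inv_alt : ∀ (d : ℕ) (x : ℕ), 1 ≤ x →
    ∑ i ∈ range (d + 1), (-1 : ℂ) ^ i * (d.choose i : ℂ) / ((x + i : ℕ) : ℂ)
      = (d.factorial : ℂ) * ((x - 1).factorial : ℂ) / ((x + d).factorial : ℂ) := by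
  intro d
  induction d with
  | zero =>
    intro x hx
    have hx1 : x - 1 + 1 = x := by omega
    have hfx : (x.factorial : ℂ) = (x : ℂ) * ((x-1).factorial : ℂ) := by
      rw [← hx1, Nat.factorial_succ]; push_cast; ring
    have hxne : ((x : ℕ) : ℂ) ≠ 0 := Nat.cast_ne_zero.mpr (by omega)
    have hfne : (((x-1).factorial : ℕ) : ℂ) ≠ 0 := Nat.cast_ne_zero.mpr (Nat.factorial_ne_zero _)
    simp only [Finset.sum_range_one, pow_zero, Nat.choose_zero_right, Nat.cast_one, one_mul,
      Nat.factorial_zero, Nat.add_zero, hfx]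
    rw [Nat.add_zero]
    field_simp
    simp [hxne]
  | succ d ih =>
    intro x hx
    have heq : ∀ i ∈ range (d + 2), (-1 : ℂ) ^ i * ((d+1).choose i : ℂ) / ((x + i : ℕ) : ℂ)
        = (-1 : ℂ) ^ i * ((d+1).choose i : ℂ) * (1 / ((x + i : ℕ) : ℂ)) := by
      intro i _; ring
    rw [show d + 1 + 1 = d + 2 from rfl, Finset.sum_congr rfl heq,
      alt_sum_succ d (fun i => 1 / ((x + i : ℕ) : ℂ))]
    have hsplit : ∀ i ∈ range (d+1), (-1 : ℂ) ^ i * (d.choose i : ℂ) * (1/((x + i : ℕ):ℂ) - 1/((x + (i+1) : ℕ):ℂ))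
        = (-1 : ℂ) ^ i * (d.choose i : ℂ) / ((x + i : ℕ):ℂ) - (-1 : ℂ) ^ i * (d.choose i : ℂ) / (((x+1) + i : ℕ):ℂ) := by
      intro i _
      have : x + (i+1) = (x+1) + i := by omega
      rw [this]; ring
    rw [Finset.sum_congr rfl hsplit, Finset.sum_sub_distrib, ih x hx, ih (x+1) (by omega)]
    have h1 : (x + 1 - 1) = x := by omega
    have h2 : x + 1 + d = x + d + 1 := by omega
    have h3 : x + (d + 1) = x + d + 1 := by omega
    rw [h1, h2, h3]
    have hfx : (x.factorial : ℂ) = (x : ℂ) * ((x-1).factorial : ℂ) := by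
      have hx1 : x - 1 + 1 = x := by omega
      rw [← hx1, Nat.factorial_succ]; push_cast; ring
    have hfd : ((x + d + 1).factorial : ℂ) = ((x + d + 1 : ℕ) : ℂ) * ((x + d).factorial : ℂ) := by
      rw [Nat.factorial_succ]; push_cast; ring
    have hne1 : (((x + d).factorial : ℕ) : ℂ) ≠ 0 := Nat.cast_ne_zero.mpr (Nat.factorial_ne_zero _)
    have hne2 : ((x + d + 1 : ℕ) : ℂ) ≠ 0 := Nat.cast_ne_zero.mpr (by omega)
    have hxne : ((x : ℕ) : ℂ) ≠ 0 := Nat.cast_ne_zero.mpr (by omega)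
    have hfd1 : (((d+1).factorial : ℕ) : ℂ) = ((d:ℂ) + 1) * (d.factorial : ℂ) := by
      rw [Nat.factorial_succ]; push_cast; ring
    have hB : ((x + d + 1 : ℕ) : ℂ) = (x : ℂ) + (d : ℂ) + 1 := by push_cast; ring
    rw [hfx, hfd, hfd1, hB]
    set F := ((x + d).factorial : ℂ) with hF
    set G := ((x - 1).factorial : ℂ) with hG
    set D := (d.factorial : ℂ) with hD
    set X := ((x : ℕ) : ℂ) with hX
    set Y := ((d : ℕ) : ℂ) with hY
    have hXY : X + Y + 1 ≠ 0 := by rw [← hB]; exact hne2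
    field_simp
    ring

noncomputable def dcoef (d ℓ i : ℕ) : ℂ :=
  ((d.factorial : ℂ) / ((2 * d + ℓ).factorial : ℂ)) *
    (((2 * d + ℓ - i).factorial : ℂ) / ((i.factorial : ℂ) * ((d - i).factorial : ℂ))) * (-1) ^ i

lemma coefB (d ℓ n : ℕ) (hdn : d < n) (hn : n ≤ 2 * d) :
    ∑ i ∈ Finset.range (d + 1), dcoef d ℓ i / (((ℓ + n - i).factorial : ℕ) : ℂ) = 0 := by
  have key : ∀ i ∈ Finset.range (d + 1),
      dcoef d ℓ i / (((ℓ + n - i).factorial : ℕ) : ℂ)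
        = (((2*d-n).factorial : ℂ) / (((2*d+ℓ).factorial : ℕ) : ℂ)) *
          ((-1:ℂ)^i * (d.choose i : ℂ) * (((2*d+ℓ-i).choose (2*d-n) : ℕ) : ℂ)) := by
    intro i hi
    simp only [Finset.mem_range] at hi
    have hi' : i ≤ d := by omega
    have e1n : (2*d+ℓ-i).choose (2*d-n) * (2*d-n).factorial * ((ℓ+n-i)).factorial
        = (2*d+ℓ-i).factorial := by
      have h := Nat.choose_mul_factorial_mul_factorial (show 2*d-n ≤ 2*d+ℓ-i by omega)
      have h2 : 2*d+ℓ-i - (2*d-n) = ℓ+n-i := by omega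
      rw [h2] at h
      exact h
    have e1 : (((2*d+ℓ-i).factorial : ℕ) : ℂ)
        = ((2*d+ℓ-i).choose (2*d-n) : ℂ) * ((2*d-n).factorial : ℂ) * ((ℓ+n-i).factorial : ℂ) := by
      exact_mod_cast congrArg (Nat.cast : ℕ → ℂ) e1n.symm
    have e2n : d.choose i * i.factorial * (d-i).factorial = d.factorial :=
      Nat.choose_mul_factorial_mul_factorial hi'
    have e2 : ((d.factorial : ℕ) : ℂ)
        = (d.choose i : ℂ) * (i.factorial : ℂ) * ((d-i).factorial : ℂ) := by
      exact_mod_cast congrArg (Nat.cast : ℕ → ℂ) e2n.symm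
    have hif : ((i.factorial : ℕ) : ℂ) ≠ 0 := Nat.cast_ne_zero.mpr (Nat.factorial_ne_zero _)
    have hdf : (((d-i).factorial : ℕ) : ℂ) ≠ 0 := Nat.cast_ne_zero.mpr (Nat.factorial_ne_zero _)
    have hlf : (((ℓ+n-i).factorial : ℕ) : ℂ) ≠ 0 := Nat.cast_ne_zero.mpr (Nat.factorial_ne_zero _)
    have hMf : (((2*d+ℓ).factorial : ℕ) : ℂ) ≠ 0 := Nat.cast_ne_zero.mpr (Nat.factorial_ne_zero _)
    rw [dcoef, e1, e2]
    field_simp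
  rw [Finset.sum_congr rfl key, ← Finset.mul_sum]
  have hz := choose_alt d (2*d-n) (2*d+ℓ) (by omega) (by omega)
  have hzc : ∑ i ∈ Finset.range (d + 1),
      (-1:ℂ)^i * (d.choose i : ℂ) * (((2*d+ℓ-i).choose (2*d-n) : ℕ) : ℂ) = 0 := by
    have := congrArg (Int.cast : ℤ → ℂ) hz
    push_cast at this
    convert this using 2
  rw [hzc, mul_zero]

lemma coefC (d ℓ : ℕ) :
    ∑ i ∈ Finset.range (d + 1), dcoef d ℓ i / (((ℓ + (2*d+1) - i).factorial : ℕ) : ℂ)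
      = (-1 : ℂ) ^ d * (d.factorial : ℂ) * ((d + ℓ).factorial : ℂ) /
          (((2 * d + ℓ).factorial : ℂ) * ((2 * d + ℓ + 1).factorial : ℂ)) := by
  have key : ∀ i ∈ Finset.range (d + 1),
      dcoef d ℓ i / (((ℓ + (2*d+1) - i).factorial : ℕ) : ℂ)
        = (1 / (((2*d+ℓ).factorial : ℕ) : ℂ)) *
          ((-1:ℂ)^i * (d.choose i : ℂ) / (((2*d+ℓ+1-i : ℕ)) : ℂ)) := by
    intro i hi
    simp only [Finset.mem_range] at hi
    have hi' : i ≤ d := by omega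
    have e3n : (ℓ + (2*d+1) - i).factorial = (2*d+ℓ+1-i) * (2*d+ℓ-i).factorial := by
      have h1 : ℓ + (2*d+1) - i = (2*d+ℓ-i) + 1 := by omega
      have h2 : 2*d+ℓ+1-i = (2*d+ℓ-i) + 1 := by omega
      rw [h1, h2, Nat.factorial_succ]
    have e3 : (((ℓ + (2*d+1) - i).factorial : ℕ) : ℂ)
        = ((2*d+ℓ+1-i : ℕ) : ℂ) * ((2*d+ℓ-i).factorial : ℂ) := by
      exact_mod_cast congrArg (Nat.cast : ℕ → ℂ) e3n
    have e2 : ((d.factorial : ℕ) : ℂ)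
        = (d.choose i : ℂ) * (i.factorial : ℂ) * ((d-i).factorial : ℂ) := by
      exact_mod_cast congrArg (Nat.cast : ℕ → ℂ)
        (Nat.choose_mul_factorial_mul_factorial hi').symm
    have hif : ((i.factorial : ℕ) : ℂ) ≠ 0 := Nat.cast_ne_zero.mpr (Nat.factorial_ne_zero _)
    have hdf : (((d-i).factorial : ℕ) : ℂ) ≠ 0 := Nat.cast_ne_zero.mpr (Nat.factorial_ne_zero _)
    have hgf : (((2*d+ℓ-i).factorial : ℕ) : ℂ) ≠ 0 := Nat.cast_ne_zero.mpr (Nat.factorial_ne_zero _)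
    have hMf : (((2*d+ℓ).factorial : ℕ) : ℂ) ≠ 0 := Nat.cast_ne_zero.mpr (Nat.factorial_ne_zero _)
    have hq : ((2*d+ℓ+1-i : ℕ) : ℂ) ≠ 0 := Nat.cast_ne_zero.mpr (by omega)
    rw [dcoef, e3, e2]
    field_simp
  rw [Finset.sum_congr rfl key, ← Finset.mul_sum]
  have refl1 : ∑ i ∈ Finset.range (d + 1),
      (-1:ℂ)^i * (d.choose i : ℂ) / (((2*d+ℓ+1-i : ℕ)) : ℂ)
      = ∑ i ∈ Finset.range (d + 1),
        (-1:ℂ)^(d-i) * (d.choose (d-i) : ℂ) / (((2*d+ℓ+1-(d-i) : ℕ)) : ℂ) := by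
    rw [← Finset.sum_range_reflect (fun i => (-1:ℂ)^(d-i) * (d.choose (d-i) : ℂ) / (((2*d+ℓ+1-(d-i) : ℕ)) : ℂ)) (d+1)]
    apply Finset.sum_congr rfl
    intro i hi
    simp only [Finset.mem_range] at hi
    have h1 : d + 1 - 1 - i = d - i := by omega
    have h2 : d - (d - i) = i := by omega
    rw [h1, h2]
  have refl2 : ∀ i ∈ Finset.range (d + 1),
      (-1:ℂ)^(d-i) * (d.choose (d-i) : ℂ) / (((2*d+ℓ+1-(d-i) : ℕ)) : ℂ)
      = (-1:ℂ)^d * ((-1:ℂ)^i * (d.choose i : ℂ) / ((((d+ℓ+1) + i : ℕ)) : ℂ)) := by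
    intro i hi
    simp only [Finset.mem_range] at hi
    have hi' : i ≤ d := by omega
    have hs : (-1:ℂ)^(d-i) = (-1:ℂ)^d * (-1:ℂ)^i := by
      have : (-1:ℂ)^(d-i) * (-1:ℂ)^i = (-1:ℂ)^d := by
        rw [← pow_add]; congr 1; omega
      have hsq : ((-1:ℂ)^i) * ((-1:ℂ)^i) = 1 := by
        rw [← pow_add, ← two_mul, pow_mul]; norm_num
      calc (-1:ℂ)^(d-i) = (-1:ℂ)^(d-i) * (((-1:ℂ)^i) * ((-1:ℂ)^i)) := by rw [hsq, mul_one]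
        _ = ((-1:ℂ)^(d-i) * (-1:ℂ)^i) * (-1:ℂ)^i := by ring
        _ = (-1:ℂ)^d * (-1:ℂ)^i := by rw [this]
    have hc : d.choose (d-i) = d.choose i := Nat.choose_symm hi' 
    have hn : (2*d+ℓ+1-(d-i)) = (d+ℓ+1) + i := by omega
    rw [hs, hc, hn]
    ring
  rw [refl1, Finset.sum_congr rfl refl2, ← Finset.mul_sum,
    inv_alt d (d+ℓ+1) (by omega)]
  have h1 : d + ℓ + 1 - 1 = d + ℓ := by omega
  have h2 : d + ℓ + 1 + d = 2*d + ℓ + 1 := by omega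
  rw [h1, h2]
  ring

lemma coefA (d ℓ n : ℕ) (hn : n ≤ d) :
    ∑ i ∈ Finset.range (d + 1), (if i ≤ n then dcoef d ℓ i / (((ℓ + n - i).factorial : ℕ) : ℂ) else 0)
      = ((d.factorial : ℂ) / ((2 * d + ℓ).factorial : ℂ)) *
        ∑ j ∈ Finset.range (n + 1),
          (((2 * d + ℓ - j).factorial : ℂ) * (-1 : ℂ) ^ j) /
            ((j.factorial : ℂ) * ((d - j).factorial : ℂ) * ((ℓ + n - j).factorial : ℂ)) := by
  rw [← Finset.sum_filter]
  have hset : (Finset.range (d+1)).filter (fun i => i ≤ n) = Finset.range (n+1) := by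
    ext i
    simp only [Finset.mem_filter, Finset.mem_range]
    omega
  rw [hset, Finset.mul_sum]
  apply Finset.sum_congr rfl
  intro j _
  rw [dcoef]
  ring

lemma poly_id (d ℓ : ℕ) (z : ℂ) :
    ∑ i ∈ Finset.range (d + 1), dcoef d ℓ i *
        ∑ k ∈ Finset.range (2*d+2-i), z ^ (i+k) / ((ℓ+k).factorial : ℂ)
      = Nhat d ℓ z +
        ((-1 : ℂ) ^ d * (d.factorial : ℂ) * ((d + ℓ).factorial : ℂ) /
          (((2 * d + ℓ).factorial : ℂ) * ((2 * d + ℓ + 1).factorial : ℂ))) * z ^ (2 * d + 1) := by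
  have step1 : ∀ i ∈ Finset.range (d + 1),
      dcoef d ℓ i * ∑ k ∈ Finset.range (2*d+2-i), z ^ (i+k) / ((ℓ+k).factorial : ℂ)
      = ∑ n ∈ Finset.range (2*d+2),
          (if i ≤ n then dcoef d ℓ i / (((ℓ + n - i).factorial : ℕ) : ℂ) else 0) * z ^ n := by
    intro i hi
    simp only [Finset.mem_range] at hi
    have h1 : ∑ n ∈ Finset.range (2*d+2),
        (if i ≤ n then dcoef d ℓ i / (((ℓ + n - i).factorial : ℕ) : ℂ) else 0) * z ^ n
        = ∑ n ∈ Finset.range (2*d+2),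
          (if i ≤ n then dcoef d ℓ i / (((ℓ + n - i).factorial : ℕ) : ℂ) * z ^ n else 0) := by
      apply Finset.sum_congr rfl
      intro n _
      split <;> simp
    rw [h1, ← Finset.sum_filter]
    have hset : (Finset.range (2*d+2)).filter (fun n => i ≤ n) = Finset.Ico i (2*d+2) := by
      ext m
      simp only [Finset.mem_filter, Finset.mem_range, Finset.mem_Ico]
      omega
    rw [hset, Finset.sum_Ico_eq_sum_range]
    have harg : 2*d+2-i = 2*d+2-i := rfl
    rw [Finset.mul_sum]
    apply Finset.sum_congr rfl
    intro k _
    have h2 : ℓ + (i + k) - i = ℓ + k := by omega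
    rw [h2]
    ring
  rw [Finset.sum_congr rfl step1, Finset.sum_comm]
  have step2 : ∀ n ∈ Finset.range (2*d+2),
      ∑ i ∈ Finset.range (d+1),
        (if i ≤ n then dcoef d ℓ i / (((ℓ + n - i).factorial : ℕ) : ℂ) else 0) * z ^ n
      = (∑ i ∈ Finset.range (d+1),
          (if i ≤ n then dcoef d ℓ i / (((ℓ + n - i).factorial : ℕ) : ℂ) else 0)) * z ^ n := by
    intro n _
    rw [Finset.sum_mul]
  rw [Finset.sum_congr rfl step2]
  -- now split into n ≤ d, d < n ≤ 2d, n = 2d+1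
  have hsplit : Finset.range (2*d+2) = Finset.range (d+1) ∪ Finset.Ico (d+1) (2*d+2) := by
    rw [Finset.range_eq_Ico, Finset.range_eq_Ico, Finset.Ico_union_Ico_eq_Ico] <;> omega
  rw [hsplit, Finset.sum_union (by
    rw [Finset.range_eq_Ico]
    exact Finset.Ico_disjoint_Ico_consecutive 0 (d+1) (2*d+2))]
  have part1 : ∑ n ∈ Finset.range (d+1),
      (∑ i ∈ Finset.range (d+1),
        (if i ≤ n then dcoef d ℓ i / (((ℓ + n - i).factorial : ℕ) : ℂ) else 0)) * z ^ n
      = Nhat d ℓ z := by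
    rw [Nhat, Finset.mul_sum]
    apply Finset.sum_congr rfl
    intro n hn
    simp only [Finset.mem_range] at hn
    rw [coefA d ℓ n (by omega)]
    ring
  have part2 : ∑ n ∈ Finset.Ico (d+1) (2*d+2),
      (∑ i ∈ Finset.range (d+1),
        (if i ≤ n then dcoef d ℓ i / (((ℓ + n - i).factorial : ℕ) : ℂ) else 0)) * z ^ n
      = ((-1 : ℂ) ^ d * (d.factorial : ℂ) * ((d + ℓ).factorial : ℂ) /
          (((2 * d + ℓ).factorial : ℂ) * ((2 * d + ℓ + 1).factorial : ℂ))) * z ^ (2 * d + 1) := by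
    have inner_eval : ∀ n, d < n → n ≤ 2*d+1 →
        ∑ i ∈ Finset.range (d+1),
          (if i ≤ n then dcoef d ℓ i / (((ℓ + n - i).factorial : ℕ) : ℂ) else 0)
        = ∑ i ∈ Finset.range (d+1), dcoef d ℓ i / (((ℓ + n - i).factorial : ℕ) : ℂ) := by
      intro n hn1 hn2
      apply Finset.sum_congr rfl
      intro i hi
      simp only [Finset.mem_range] at hi
      rw [if_pos (by omega)]
    rw [Finset.sum_eq_single (2*d+1)]
    · rw [inner_eval (2*d+1) (by omega) (by omega), coefC d ℓ]
    · intro n hn hne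
      simp only [Finset.mem_Ico] at hn
      rw [inner_eval n (by omega) (by omega), coefB d ℓ n (by omega) (by omega), zero_mul]
    · intro h
      exfalso
      apply h
      simp only [Finset.mem_Ico]
      omega
  rw [part1, part2]

lemma summable_phi (ℓ : ℕ) (z : ℂ) : Summable (fun k : ℕ => z ^ k / ((ℓ + k).factorial : ℂ)) := by
  apply Summable.of_norm
  apply Summable.of_nonneg_of_le (fun k => norm_nonneg _)
    (fun k => ?_) (Real.summable_pow_div_factorial ‖z‖)
  rw [norm_div, norm_pow]
  have h1 : (k.factorial : ℝ) ≤ ‖((ℓ + k).factorial : ℂ)‖ := by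
    rw [Complex.norm_natCast]
    exact_mod_cast Nat.factorial_le (by omega)
  exact div_le_div_of_nonneg_left (by positivity) (by exact_mod_cast Nat.factorial_pos k) h1

lemma Dhat_eq (d ℓ : ℕ) (z : ℂ) :
    Dhat d ℓ z = ∑ i ∈ Finset.range (d + 1), dcoef d ℓ i * z ^ i := by
  rw [Dhat, Finset.mul_sum]
  apply Finset.sum_congr rfl
  intro i _
  rw [dcoef, neg_pow]
  ring

noncomputable def rtail (ℓ m : ℕ) (z : ℂ) : ℂ := ∑' k : ℕ, z ^ k / (((ℓ + m + k).factorial : ℕ) : ℂ)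

lemma phi_split (ℓ m : ℕ) (z : ℂ) :
    phiC ℓ z = (∑ k ∈ Finset.range m, z ^ k / ((ℓ + k).factorial : ℂ)) + z ^ m * rtail ℓ m z := by
  rw [phiC, ← (summable_phi ℓ z).sum_add_tsum_nat_add m]
  congr 1
  rw [rtail, ← tsum_mul_left]
  apply tsum_congr
  intro k
  have h : ℓ + (k + m) = ℓ + m + k := by omega
  rw [h, pow_add]
  ring

lemma rtail_bound (ℓ m : ℕ) (z : ℂ) (hz : ‖z‖ ≤ 1) :
    ‖rtail ℓ m z‖ ≤ ∑' k : ℕ, (1 : ℝ) / (k.factorial : ℝ) := by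
  have hE : Summable (fun k : ℕ => (1 : ℝ) / (k.factorial : ℝ)) := by
    simpa using Real.summable_pow_div_factorial 1
  have hsn : Summable (fun k : ℕ => ‖z ^ k / (((ℓ + m + k).factorial : ℕ) : ℂ)‖) :=
    summable_norm_iff.mpr (summable_phi (ℓ + m) z)
  refine (norm_tsum_le_tsum_norm hsn).trans (Summable.tsum_le_tsum (fun k => ?_) hsn hE)
  rw [norm_div, norm_pow, Complex.norm_natCast]
  apply div_le_div₀ (by norm_num)
  · exact pow_le_one₀ (norm_nonneg z) hz
  · exact_mod_cast Nat.factorial_pos k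
  · exact_mod_cast Nat.factorial_le (by omega)


/-- For all integers `d ≥ 0`, `ℓ ≥ 0`, the function
`z ↦ φ_ℓ(z)·D̂_{d,ℓ}(z) − N̂_{d,ℓ}(z) − ((−1)^d d!(d+ℓ)!/((2d+ℓ)!(2d+ℓ+1)!)) z^{2d+1}`
vanishes to order at least `2d+2` at `z = 0`. -/
theorem stmt5 (d ℓ : ℕ) :
    ∃ C > (0 : ℝ), ∃ δ > (0 : ℝ), ∀ z : ℂ, ‖z‖ ≤ δ →
      ‖(phiC ℓ z * Dhat d ℓ z - Nhat d ℓ z -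
          ((-1 : ℂ) ^ d * (d.factorial : ℂ) * ((d + ℓ).factorial : ℂ) /
            (((2 * d + ℓ).factorial : ℂ) * ((2 * d + ℓ + 1).factorial : ℂ))) * z ^ (2 * d + 1))‖
        ≤ C * ‖z‖ ^ (2 * d + 2) := by
  set E : ℝ := ∑' k : ℕ, (1 : ℝ) / (k.factorial : ℝ) with hE
  have hEnn : 0 ≤ E := tsum_nonneg (fun k => by positivity)
  set S : ℝ := ∑ i ∈ Finset.range (d + 1), ‖dcoef d ℓ i‖ with hS
  have hSnn : 0 ≤ S := Finset.sum_nonneg (fun i _ => norm_nonneg _)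
  refine ⟨S * E + 1, by positivity, 1, by norm_num, fun z hz => ?_⟩
  -- key decomposition
  have key : phiC ℓ z * Dhat d ℓ z - Nhat d ℓ z -
      ((-1 : ℂ) ^ d * (d.factorial : ℂ) * ((d + ℓ).factorial : ℂ) /
        (((2 * d + ℓ).factorial : ℂ) * ((2 * d + ℓ + 1).factorial : ℂ))) * z ^ (2 * d + 1)
      = z ^ (2*d+2) * ∑ i ∈ Finset.range (d + 1), dcoef d ℓ i * rtail ℓ (2*d+2-i) z := by
    have expand : phiC ℓ z * Dhat d ℓ z
        = (∑ i ∈ Finset.range (d + 1), dcoef d ℓ i *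
            ∑ k ∈ Finset.range (2*d+2-i), z ^ (i+k) / ((ℓ+k).factorial : ℂ))
          + z ^ (2*d+2) * ∑ i ∈ Finset.range (d + 1), dcoef d ℓ i * rtail ℓ (2*d+2-i) z := by
      rw [Dhat_eq, Finset.mul_sum, Finset.mul_sum, ← Finset.sum_add_distrib]
      apply Finset.sum_congr rfl
      intro i hi
      simp only [Finset.mem_range] at hi
      have him : i + (2*d+2-i) = 2*d+2 := by omega
      have hzp : z ^ i * z ^ (2*d+2-i) = z ^ (2*d+2) := by rw [← pow_add, him]
      have hin : z ^ i * ∑ k ∈ Finset.range (2*d+2-i), z ^ k / ((ℓ+k).factorial : ℂ)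
          = ∑ k ∈ Finset.range (2*d+2-i), z ^ (i+k) / ((ℓ+k).factorial : ℂ) := by
        rw [Finset.mul_sum]
        apply Finset.sum_congr rfl
        intro k _
        rw [pow_add]
        ring
      calc phiC ℓ z * (dcoef d ℓ i * z ^ i)
          = dcoef d ℓ i * (z ^ i * phiC ℓ z) := by ring
        _ = dcoef d ℓ i * (z ^ i * ((∑ k ∈ Finset.range (2*d+2-i), z ^ k / ((ℓ+k).factorial : ℂ))
              + z ^ (2*d+2-i) * rtail ℓ (2*d+2-i) z)) := by rw [← phi_split]
        _ = dcoef d ℓ i * (z ^ i * ∑ k ∈ Finset.range (2*d+2-i), z ^ k / ((ℓ+k).factorial : ℂ))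
              + (z ^ i * z ^ (2*d+2-i)) * (dcoef d ℓ i * rtail ℓ (2*d+2-i) z) := by ring
        _ = _ := by rw [hin, hzp]
    rw [expand, poly_id]
    ring
  rw [key, norm_mul, norm_pow]
  have hR : ‖∑ i ∈ Finset.range (d + 1), dcoef d ℓ i * rtail ℓ (2*d+2-i) z‖ ≤ S * E := by
    refine (norm_sum_le _ _).trans ?_
    rw [hS, Finset.sum_mul]
    apply Finset.sum_le_sum
    intro i _
    rw [norm_mul]
    exact mul_le_mul_of_nonneg_left (rtail_bound ℓ (2*d+2-i) z hz) (norm_nonneg _)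
  calc ‖z‖ ^ (2*d+2) * ‖∑ i ∈ Finset.range (d + 1), dcoef d ℓ i * rtail ℓ (2*d+2-i) z‖
      ≤ ‖z‖ ^ (2*d+2) * (S * E) := by
        exact mul_le_mul_of_nonneg_left hR (by positivity)
    _ ≤ (S * E + 1) * ‖z‖ ^ (2*d+2) := by nlinarith [pow_nonneg (norm_nonneg z) (2*d+2)]
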